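/- Suprema and infima of uniformly bounded sequences of quasicontinuous functions are quasicontinuous: let f_n : ℝ^d → ℝ be a sequence of quasicontinuous functions for which there is M ∈ ℝ with |f_n(x)| ≤ M for all n and all x ∈ ℝ^d. Then the functions φ(x) = ⨆ n, f_n(x) and ψ(x) = ⨅ n, f_n(x) are quasicontinuous. -/

import Mathlib

open MeasureTheory

/-- Tonelli's notion of quasicontinuity: for every `ε > 0` there is an open set of
Lebesgue measure less than `ε` off which the function is continuous. -/
def Quasicontinuous {d : ℕ} (f : (Fin d → ℝ) → ℝ) : Prop :=
  ∀ ε : ℝ, 0 < ε → ∃ O : Set (Fin d → ℝ), IsOpen O ∧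
    volume O < ENNReal.ofReal ε ∧ ContinuousOn f Oᶜ

open Filter Topology Set
open scoped ENNReal NNReal

private lemma qc_iSup
    (d : ℕ) (f : ℕ → (Fin d → ℝ) → ℝ)
    (hq : ∀ n, Quasicontinuous (f n))
    (M : ℝ) (hM : ∀ n x, |f n x| ≤ M) :
    Quasicontinuous (fun x => ⨆ n, f n x) := by
  classical
  intro ε hε
  set φ : (Fin d → ℝ) → ℝ := fun x => ⨆ n, f n x with hφ
  set E := ENNReal.ofReal ε with hEdef
  have hE0 : E / 2 ≠ 0 := by
    simp only [hEdef, ne_eq, ENNReal.div_eq_zero_iff]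
    push_neg
    exact ⟨by simp [ENNReal.ofReal_pos, hε], by norm_num⟩
  obtain ⟨δ, δpos, hδ⟩ := ENNReal.exists_pos_sum_of_countable hE0 ℕ
  obtain ⟨δ', δ'pos, hδ'⟩ := ENNReal.exists_pos_sum_of_countable hE0 ℕ
  choose O hOopen hOvol hOcont using fun n => hq n (δ n) (δpos n)
  set U : Set (Fin d → ℝ) := ⋃ n, O n with hUdef
  have hUopen : IsOpen U := isOpen_iUnion hOopen
  have hUvol : volume U ≤ ∑' n, (δ n : ℝ≥0∞) := by
    refine (measure_iUnion_le _).trans (ENNReal.tsum_le_tsum fun n => ?_)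
    simpa [ENNReal.ofReal_coe_nnreal] using (hOvol n).le
  have hUc : ∀ n, ContinuousOn (f n) Uᶜ := fun n =>
    (hOcont n).mono (Set.compl_subset_compl.2 (Set.subset_iUnion O n))
  -- partial maxima
  set g : ℕ → (Fin d → ℝ) → ℝ :=
    fun N x => (Finset.range (N + 1)).sup' (Finset.nonempty_range_iff.2 (Nat.succ_ne_zero N))
      fun n => f n x with hgdef
  have hgc : ∀ N, ContinuousOn (g N) Uᶜ := by
    intro N
    induction N with
    | zero =>
      simpa [hgdef] using hUc 0
    | succ N ih =>
      have heq : ∀ x, g (N + 1) x = f (N + 1) x ⊔ g N x := by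
        intro x
        simp only [hgdef, Finset.range_add_one]
        rw [Finset.sup'_insert]
      simp only [funext heq]
      exact (hUc (N + 1)).sup ih
  have hfb : ∀ x, BddAbove (Set.range fun n => f n x) := by
    intro x
    exact ⟨M, by rintro y ⟨n, rfl⟩; exact (abs_le.1 (hM n x)).2⟩
  have hfle : ∀ n x, f n x ≤ φ x := fun n x => le_ciSup (hfb x) n
  have hgle : ∀ N x, g N x ≤ φ x := fun N x =>
    Finset.sup'_le _ _ fun n _ => hfle n x
  have hgmono : ∀ x, Monotone fun N => g N x := by
    intro x N N' hNN'
    exact Finset.sup'_mono _ (Finset.range_subset_range.2 (by omega))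
      (Finset.nonempty_range_iff.2 (Nat.succ_ne_zero N))
  have hgtend : ∀ x, Tendsto (fun N => g N x) atTop (𝓝 (φ x)) := by
    intro x
    have hbdd : BddAbove (Set.range fun N => g N x) :=
      ⟨φ x, by rintro y ⟨N, rfl⟩; exact hgle N x⟩
    have htd := tendsto_atTop_ciSup (hgmono x) hbdd
    have : (⨆ N, g N x) = φ x := by
      refine le_antisymm (ciSup_le fun N => hgle N x) (ciSup_le fun n => ?_)
      have h1 : f n x ≤ g n x :=
        Finset.le_sup' (f := fun m => f m x) (Finset.self_mem_range_succ n)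
      exact h1.trans (le_ciSup hbdd n)
    rwa [this] at htd
  -- Egorov on each ball
  have main : ∀ k : ℕ, ∃ V : Set (Fin d → ℝ), IsOpen V ∧ volume V < (δ' k : ℝ≥0∞) ∧
      ContinuousOn φ ((Uᶜ ∩ Metric.closedBall 0 (k + 1)) \ V) := by
    intro k
    set s : Set (Fin d → ℝ) := Uᶜ ∩ Metric.closedBall 0 (k + 1) with hsdef
    have hsm : MeasurableSet s :=
      (hUopen.isClosed_compl.measurableSet).inter measurableSet_closedBall
    have hsfin : volume s ≠ ⊤ := by
      refine (lt_of_le_of_lt (measure_mono Set.inter_subset_right) ?_).ne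
      exact (isCompact_closedBall (0 : Fin d → ℝ) (k + 1)).measure_lt_top
    set G : ℕ → (Fin d → ℝ) → ℝ := fun N => s.piecewise (g N) 0 with hGdef
    set H : (Fin d → ℝ) → ℝ := s.piecewise φ 0 with hHdef
    have hGmeas : ∀ N, StronglyMeasurable (G N) := by
      intro N
      exact (ContinuousOn.measurable_piecewise
        ((hgc N).mono Set.inter_subset_left) continuousOn_const hsm).stronglyMeasurable
    have hGH : ∀ x, Tendsto (fun N => G N x) atTop (𝓝 (H x)) := by
      intro x
      by_cases hx : x ∈ s
      · simp only [hGdef, hHdef, Set.piecewise_eq_of_mem _ _ _ hx]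
        exact hgtend x
      · simp only [hGdef, hHdef, Set.piecewise_eq_of_notMem _ _ _ hx]
        exact tendsto_const_nhds
    have hHmeas : StronglyMeasurable H := stronglyMeasurable_of_tendsto _ hGmeas (tendsto_pi_nhds.2 hGH)
    have hp : (0 : ℝ) < (δ' k : ℝ) := by exact_mod_cast δ'pos k
    have hδ'pos : (0 : ℝ) < (δ' k : ℝ) / 2 := by linarith
    obtain ⟨t, hts, htm, htvol, htu⟩ := MeasureTheory.tendstoUniformlyOn_of_ae_tendsto
      hGmeas hHmeas hsm hsfin (Filter.Eventually.of_forall fun x _ => hGH x) hδ'pos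
    have htvol' : volume t < (δ' k : ℝ≥0∞) := by
      refine lt_of_le_of_lt htvol ?_
      rw [← ENNReal.ofReal_coe_nnreal]
      exact ENNReal.ofReal_lt_ofReal_iff hp |>.2 (by linarith)
    obtain ⟨V, htV, hVopen, hVvol⟩ := Set.exists_isOpen_lt_of_lt t _ htvol'
    refine ⟨V, hVopen, hVvol, ?_⟩
    have hsub : (s \ V) ⊆ s \ t := Set.diff_subset_diff_right htV
    have hcontH : ContinuousOn H (s \ t) := by
      refine htu.continuousOn (Filter.Eventually.of_forall fun N => ?_).frequently
      refine ContinuousOn.congr ((hgc N).mono ?_) ?_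
      · exact (Set.diff_subset.trans Set.inter_subset_left)
      · intro x hx
        exact Set.piecewise_eq_of_mem _ _ _ hx.1
    refine ContinuousOn.congr (hcontH.mono hsub) ?_
    intro x hx
    exact (Set.piecewise_eq_of_mem _ _ _ hx.1).symm
  choose V hVopen hVvol hVcont using main
  refine ⟨U ∪ ⋃ k, V k, hUopen.union (isOpen_iUnion hVopen), ?_, ?_⟩
  · have h1 : volume (⋃ k, V k) ≤ ∑' k, (δ' k : ℝ≥0∞) :=
      (measure_iUnion_le _).trans (ENNReal.tsum_le_tsum fun k => (hVvol k).le)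
    calc volume (U ∪ ⋃ k, V k) ≤ volume U + volume (⋃ k, V k) := measure_union_le _ _
      _ ≤ (∑' n, (δ n : ℝ≥0∞)) + ∑' k, (δ' k : ℝ≥0∞) := add_le_add hUvol h1
      _ < E / 2 + E / 2 := ENNReal.add_lt_add hδ hδ'
      _ = E := ENNReal.add_halves E
  · intro x hx
    simp only [Set.compl_union, Set.mem_inter_iff, Set.mem_compl_iff, Set.mem_iUnion,
      not_exists] at hx
    obtain ⟨hxU, hxV⟩ := hx
    set k := ⌈‖x‖⌉₊ with hk
    have hxball : x ∈ Metric.ball (0 : Fin d → ℝ) (k + 1) := by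
      rw [mem_ball_zero_iff]
      have : ‖x‖ ≤ (k : ℝ) := Nat.le_ceil _
      linarith
    have hxmem : x ∈ (Uᶜ ∩ Metric.closedBall 0 (k + 1)) \ V k :=
      ⟨⟨hxU, Metric.ball_subset_closedBall hxball⟩, hxV k⟩
    have hsub : (U ∪ ⋃ k, V k)ᶜ ∩ Metric.ball (0 : Fin d → ℝ) (k + 1) ⊆
        (Uᶜ ∩ Metric.closedBall 0 (k + 1)) \ V k := by
      rintro y ⟨hy, hyb⟩
      simp only [Set.compl_union, Set.mem_inter_iff, Set.mem_compl_iff, Set.mem_iUnion,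
        not_exists] at hy
      exact ⟨⟨hy.1, Metric.ball_subset_closedBall hyb⟩, hy.2 k⟩
    have h1 : ContinuousWithinAt φ ((Uᶜ ∩ Metric.closedBall 0 (k + 1)) \ V k) x :=
      (hVcont k) x hxmem
    refine h1.mono_of_mem_nhdsWithin ?_
    refine Filter.mem_of_superset ?_ hsub
    exact inter_mem_nhdsWithin _ (Metric.isOpen_ball.mem_nhds hxball)

/-- Pointwise suprema and infima of a uniformly bounded sequence of quasicontinuous
functions are quasicontinuous. -/
theorem quasicontinuous_iSup_iInf
    (d : ℕ) (f : ℕ → (Fin d → ℝ) → ℝ)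
    (hq : ∀ n, Quasicontinuous (f n))
    (M : ℝ) (hM : ∀ n x, |f n x| ≤ M) :
    Quasicontinuous (fun x => ⨆ n, f n x) ∧
      Quasicontinuous (fun x => ⨅ n, f n x) := by
  constructor
  · exact qc_iSup d f hq M hM
  · have hq' : ∀ n, Quasicontinuous (fun x => -(f n x)) := by
      intro n ε hε
      obtain ⟨O, hO1, hO2, hO3⟩ := hq n ε hε
      exact ⟨O, hO1, hO2, hO3.neg⟩
    have hM' : ∀ n x, |(fun x => -(f n x)) x| ≤ M := by
      intro n x; simpa [abs_neg] using hM n x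
    have key := qc_iSup d (fun n x => -(f n x)) hq' M hM'
    have heq : (fun x => ⨅ n, f n x) = fun x => -(⨆ n, -(f n x)) := by
      funext x
      have hba : BddAbove (Set.range fun n => -(f n x)) :=
        ⟨M, by rintro y ⟨n, rfl⟩; exact (abs_le.1 (hM' n x)).2⟩
      have hbb : BddBelow (Set.range fun n => f n x) :=
        ⟨-M, by rintro y ⟨n, rfl⟩; exact (abs_le.1 (hM n x)).1⟩
      refine le_antisymm ?_ ?_
      · rw [le_neg]
        exact ciSup_le fun n => neg_le_neg (ciInf_le hbb n)
      · refine le_ciInf fun n => ?_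
        rw [neg_le]
        exact le_ciSup hba n
    rw [heq]
    intro ε hε
    obtain ⟨O, hO1, hO2, hO3⟩ := key ε hε
    exact ⟨O, hO1, hO2, hO3.neg⟩
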